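/- Let ξ be the Lie algebra endomorphism of the free Lie algebra L_2 on generators x, y determined by ξ(x) = ax + cy and ξ(y) = bx + dy with ad − bc ≠ 0 (so that ξ is an automorphism). Then ξ maps every symmetric element of L_2 to a symmetric element if and only if a = d and b = c; in that case the determinant condition reads a² − b² ≠ 0 and the inverse automorphism is given by ξ⁻¹(x) = (a² − b²)⁻¹(ax − by), ξ⁻¹(y) = (a² − b²)⁻¹(−bx + ay). -/

import Mathlib

noncomputable section

open LieAlgebra LieModule

variable (K : Type*) [Field K] [CharZero K] (n c : ℕ)

/-- The free Lie algebra `L_n` of rank `n` over `K`. -/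
abbrev L := FreeLieAlgebra K (Fin n)

/-- The generators `x_1, …, x_n` of `L_n`. -/
def X (i : Fin n) : L K n := FreeLieAlgebra.of K i

/-- The automorphic action of a permutation `π ∈ S_n` on `L_n`, permuting the generators. -/
def permMap (π : Equiv.Perm (Fin n)) : L K n →ₗ⁅K⁆ L K n :=
  FreeLieAlgebra.lift K (fun i => FreeLieAlgebra.of K (π i))

/-- An element of `L_2` is symmetric if it is fixed by the automorphism exchanging the two
generators `x` and `y`. -/
def LIsSymm (p : L K 2) : Prop := permMap K 2 (Equiv.swap 0 1) p = p

/-- The linear endomorphism `ξ` of `L_2` with `ξ(x) = ax + cy` and `ξ(y) = bx + dy`. -/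
def xiMap (a b c d : K) : L K 2 →ₗ⁅K⁆ L K 2 :=
  FreeLieAlgebra.lift K ![a • X K 2 0 + c • X K 2 1, b • X K 2 0 + d • X K 2 1]

section

attribute [local instance] LieRing.ofAssociativeRing

/-- The matrix `e`. -/
def auxEM : Matrix (Fin 2) (Fin 2) K := !![0,1;0,0]

/-- The matrix `f`. -/
def auxFM : Matrix (Fin 2) (Fin 2) K := !![0,0;1,0]

/-- The evaluation homomorphism `x ↦ e`, `y ↦ f`. -/
def auxPhi : L K 2 →ₗ⁅K⁆ Matrix (Fin 2) (Fin 2) K :=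
  FreeLieAlgebra.lift K ![auxEM K, auxFM K]

/-- The evaluation homomorphism `x ↦ f`, `y ↦ e`. -/
def auxPsi : L K 2 →ₗ⁅K⁆ Matrix (Fin 2) (Fin 2) K :=
  FreeLieAlgebra.lift K ![auxFM K, auxEM K]

theorem auxPsi_eq : auxPsi K = (auxPhi K).comp (permMap K 2 (Equiv.swap 0 1)) := by
  ext i
  fin_cases i <;> simp [auxPsi, auxPhi, permMap, FreeLieAlgebra.lift_of_apply]

theorem aux_symm_eval {w : L K 2} (hw : LIsSymm K w) : auxPhi K w = auxPsi K w := by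
  rw [auxPsi_eq, LieHom.comp_apply, hw]

end

theorem linear_aut_symm_iff {K : Type*} [Field K] [CharZero K] (a b c d : K)
    (h : a * d - b * c ≠ 0) :
    ((∀ p : L K 2, LIsSymm K p → LIsSymm K (xiMap K a b c d p)) ↔ (a = d ∧ b = c)) ∧
    (a = d → b = c →
      (a ^ 2 - b ^ 2 ≠ 0 ∧
        ∀ p : L K 2,
          xiMap K ((a ^ 2 - b ^ 2)⁻¹ * a) (-((a ^ 2 - b ^ 2)⁻¹ * b))
              (-((a ^ 2 - b ^ 2)⁻¹ * b)) ((a ^ 2 - b ^ 2)⁻¹ * a) (xiMap K a b c d p) = p ∧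
          xiMap K a b c d
              (xiMap K ((a ^ 2 - b ^ 2)⁻¹ * a) (-((a ^ 2 - b ^ 2)⁻¹ * b))
                (-((a ^ 2 - b ^ 2)⁻¹ * b)) ((a ^ 2 - b ^ 2)⁻¹ * a) p) = p)) := by
  letI : LieRing (Matrix (Fin 2) (Fin 2) K) := LieRing.ofAssociativeRing
  constructor
  · constructor
    · intro H
      have hp1 : LIsSymm K (X K 2 0 + X K 2 1) := by
        simp [LIsSymm, permMap, X, FreeLieAlgebra.lift_of_apply]
        abel
      have hq : LIsSymm K (⁅X K 2 0, ⁅X K 2 0, X K 2 1⁆⁆ + ⁅X K 2 1, ⁅X K 2 1, X K 2 0⁆⁆) := by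
        simp [LIsSymm, permMap, X, FreeLieAlgebra.lift_of_apply]
        abel
      have H1 := aux_symm_eval K (H _ hp1)
      have H2 := aux_symm_eval K (H _ hq)
      simp [auxPhi, auxPsi, xiMap, X, FreeLieAlgebra.lift_of_apply] at H1
      have h1 := congrFun (congrFun H1 0) 1
      simp [auxEM, auxFM] at h1
      simp [auxPhi, auxPsi, xiMap, X, FreeLieAlgebra.lift_of_apply, Ring.lie_def] at H2
      have h2 := congrFun (congrFun H2 0) 1
      simp [auxEM, auxFM, Matrix.mul_apply, Fin.sum_univ_two] at h2
      ring_nf at h2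
      have key2 : (a * d - b * c) * ((a - b) - (d - c)) = 0 := by
        linear_combination (-1/2 : K) * h2
      have h3 : a - b = d - c := by
        rcases mul_eq_zero.mp key2 with h' | h'
        · exact absurd h' h
        · linear_combination h'
      exact ⟨by linear_combination (1/2 : K) * h1 + (1/2 : K) * h3,
        by linear_combination (1/2 : K) * h1 - (1/2 : K) * h3⟩
    · rintro ⟨rfl, rfl⟩
      intro p hp
      have comm : (permMap K 2 (Equiv.swap 0 1)).comp (xiMap K a b b a)
          = (xiMap K a b b a).comp (permMap K 2 (Equiv.swap 0 1)) := by
        ext i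
        fin_cases i <;>
          simp [permMap, xiMap, FreeLieAlgebra.lift_of_apply, X] <;> abel
      show permMap K 2 (Equiv.swap 0 1) (xiMap K a b b a p) = _
      rw [← LieHom.comp_apply, comm, LieHom.comp_apply, hp]
  · rintro rfl rfl
    have hab : a ^ 2 - b ^ 2 ≠ 0 := by
      intro hc; exact h (by linear_combination hc)
    have hab' : -b ^ 2 + a ^ 2 ≠ 0 := by intro hc; exact hab (by linear_combination hc)
    refine ⟨hab, fun p => ?_⟩
    have comp1 : (xiMap K ((a ^ 2 - b ^ 2)⁻¹ * a) (-((a ^ 2 - b ^ 2)⁻¹ * b))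
        (-((a ^ 2 - b ^ 2)⁻¹ * b)) ((a ^ 2 - b ^ 2)⁻¹ * a)).comp (xiMap K a b b a)
        = LieHom.id := by
      ext i
      fin_cases i <;>
      · simp [xiMap, X, FreeLieAlgebra.lift_of_apply, smul_add, smul_smul]
        match_scalars
        all_goals try ring
        all_goals (field_simp; try ring)
    have comp2 : (xiMap K a b b a).comp (xiMap K ((a ^ 2 - b ^ 2)⁻¹ * a)
        (-((a ^ 2 - b ^ 2)⁻¹ * b)) (-((a ^ 2 - b ^ 2)⁻¹ * b)) ((a ^ 2 - b ^ 2)⁻¹ * a))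
        = LieHom.id := by
      ext i
      fin_cases i <;>
      · simp [xiMap, X, FreeLieAlgebra.lift_of_apply, smul_add, smul_smul]
        match_scalars
        all_goals try ring
        all_goals (field_simp; try ring)
    exact ⟨LieHom.congr_fun comp1 p, LieHom.congr_fun comp2 p⟩
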